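/- Let h : Σ_s* → Σ_e* be a synchronizing q-uniform morphism (q ≥ 1), and let 1 < α < β < 2 be rationals and p a positive integer. If h(w) is (β⁺, p)-free for every α⁺-free word w with |w| < max{2β/(β−α), 2(q−1)(2β−1)/(q(β−1))}, then h(t) is (β⁺, p)-free for every (finite or infinite) α⁺-free word t. -/

import Mathlib

def HasPeriod {A : Type*} (w : List A) (p : ℕ) : Prop :=
  1 ≤ p ∧ ∀ i, i + p < w.length → w[i]? = w[i + p]?

noncomputable def period {A : Type*} (w : List A) : ℕ :=
  sInf {p | HasPeriod w p}

noncomputable def exponent {A : Type*} (w : List A) : ℚ :=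
  (w.length : ℚ) / (period w : ℚ)

/-- `w` is a finite factor of the infinite word `f`. -/
def FactorOf {A : Type*} (w : List A) (f : ℕ → A) : Prop :=
  ∃ i, w = (List.range w.length).map (fun k => f (i + k))

namespace Stmt16Aux

set_option maxHeartbeats 1000000

variable {A : Type*}

lemma hasPeriod_succ_len (w : List A) : HasPeriod w (w.length + 1) :=
  ⟨Nat.succ_le_succ (Nat.zero_le _), fun i hi => absurd hi (by omega)⟩

lemma period_hasPeriod (w : List A) : HasPeriod w (period w) := by
  have : {p | HasPeriod w p}.Nonempty := ⟨w.length + 1, hasPeriod_succ_len w⟩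
  exact Nat.sInf_mem this

lemma one_le_period (w : List A) : 1 ≤ period w := (period_hasPeriod w).1

lemma period_le {w : List A} {p : ℕ} (hp : HasPeriod w p) : period w ≤ p := Nat.sInf_le hp

lemma lt_exponent {w : List A} {P : ℕ} (hw : HasPeriod w P) {α : ℚ} (hα : 0 ≤ α)
    (hlt : α * P < w.length) : α < exponent w := by
  have h1 : 1 ≤ period w := one_le_period w
  have h2 : period w ≤ P := period_le hw
  have hP : (0:ℚ) < P := by exact_mod_cast lt_of_lt_of_le h1 h2
  have hper : (0:ℚ) < period w := by exact_mod_cast h1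
  have : α < (w.length : ℚ) / P := (lt_div_iff₀ hP).mpr hlt
  refine lt_of_lt_of_le this ?_
  exact div_le_div_of_nonneg_left (by positivity) hper (by exact_mod_cast h2)

lemma take_drop_infix (l : List A) (a b : ℕ) : (l.drop a).take b <:+: l :=
  ((List.take_prefix _ _).isInfix).trans (List.drop_suffix a l).isInfix

variable {σs σe : Type*} {q : ℕ} {h : σs → List σe}

lemma join_length (huni : ∀ a, (h a).length = q) (t : List σs) :
    ((t.map h).flatten).length = q * t.length := by
  induction t with
  | nil => simp
  | cons a t ih =>
    simp only [List.map_cons, List.flatten_cons, List.length_append, ih, huni,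
      List.length_cons, Nat.mul_succ]
    omega

lemma join_get? (huni : ∀ a, (h a).length = q) (t : List σs) :
    ∀ (k : ℕ) (hk : k < t.length) (i : ℕ), i < q →
    ((t.map h).flatten)[q * k + i]? = (h (t.get ⟨k, hk⟩))[i]? := by
  induction t with
  | nil => intro k hk; simp at hk
  | cons a t ih =>
    intro k hk i hi
    simp only [List.map_cons, List.flatten_cons]
    cases k with
    | zero =>
      rw [Nat.mul_zero, Nat.zero_add, List.getElem?_append_left (by rw [huni]; exact hi)]
      rfl
    | succ k =>
      have hge : (h a).length ≤ q * (k+1) + i := by rw [huni, Nat.mul_succ]; omega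
      rw [List.getElem?_append_right hge]
      have hidx : q * (k+1) + i - (h a).length = q * k + i := by
        rw [huni]; rw [Nat.mul_succ]; omega
      rw [hidx]
      exact ih k (by simpa using hk) i hi

lemma join_slice (huni : ∀ a, (h a).length = q) (t : List σs) (a b : ℕ)
    (hab : a ≤ b) (hb : b ≤ t.length) :
    ((((t.drop a).take (b - a)).map h).flatten)
      = (((t.map h).flatten).drop (q * a)).take (q * (b - a)) := by
  have h1 : t = t.take a ++ ((t.drop a).take (b - a) ++ t.drop b) := by
    rw [← List.append_assoc, ← List.take_add, Nat.add_sub_cancel' hab,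
      List.take_append_drop]
  have hlenA : (((t.take a).map h).flatten).length = q * a := by
    rw [join_length huni, List.length_take, min_eq_left (le_trans hab hb)]
  have hlenB : ((((t.drop a).take (b - a)).map h).flatten).length = q * (b - a) := by
    rw [join_length huni, List.length_take, List.length_drop,
      min_eq_left (by omega)]
  conv_rhs => rw [h1]
  simp only [List.map_append, List.flatten_append]
  rw [List.drop_left' hlenA, List.take_left' hlenB]

lemma hinj (hsync : ∀ (a b c : σs) (v w : List σe),
      h a ++ h b = v ++ h c ++ w → (v = [] ∧ a = c) ∨ (w = [] ∧ b = c))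
    {a c : σs} (hac : h a = h c) : a = c := by
  rcases hsync a a c [] (h a) (by rw [hac]; simp) with ⟨-, h'⟩ | ⟨-, h'⟩ <;> exact h'

/-- Core synchronization: an exact copy of a block inside the image is aligned. -/
lemma core (hq : 1 ≤ q) (huni : ∀ a, (h a).length = q)
    (hsync : ∀ (a b c : σs) (v w : List σe),
      h a ++ h b = v ++ h c ++ w → (v = [] ∧ a = c) ∨ (w = [] ∧ b = c))
    (t : List σs) (k j : ℕ) (hk : k < t.length)
    (hj : j + q ≤ q * t.length)
    (hcopy : ∀ i, i < q → ((t.map h).flatten)[j + i]? = (h (t.get ⟨k, hk⟩))[i]?) :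
    ∃ hm : j / q < t.length, q ∣ j ∧ t.get ⟨j / q, hm⟩ = t.get ⟨k, hk⟩ := by
  have hjmr : j = q * (j / q) + j % q := (Nat.div_add_mod j q).symm
  set m := j / q with hm_def
  set r := j % q with hr_def
  have hr : r < q := Nat.mod_lt _ hq
  have hmlt : m < t.length := by
    have h2 : q * m + q ≤ q * t.length := by omega
    have := Nat.lt_of_mul_lt_mul_left (a := q) (by omega : q * m < q * t.length)
    exact this
  have hrz : r = 0 := by
    by_contra hrz
    have hm1 : m + 1 < t.length := by
      have hq2 : q * (m + 2) = q * m + q + q := by ring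
      have h2 : q * (m + 2) < q * (t.length + 1) := by
        have : q * (t.length + 1) = q * t.length + q := by ring
        omega
      have := Nat.lt_of_mul_lt_mul_left h2
      omega
    set A := h (t.get ⟨m, hmlt⟩) with hA
    set B := h (t.get ⟨m + 1, hm1⟩) with hB
    set C := h (t.get ⟨k, hk⟩) with hC
    have hABlen : (A ++ B).length = 2 * q := by
      simp [hA, hB, huni]; ring
    have hAB : ∀ n, n < 2 * q →
        (A ++ B)[n]? = ((t.map h).flatten)[q * m + n]? := by
      intro n hn
      by_cases hnq : n < q
      · rw [List.getElem?_append_left (by rw [hA, huni]; exact hnq)]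
        exact (join_get? huni t m hmlt n hnq).symm
      · rw [List.getElem?_append_right (by rw [hA, huni]; omega)]
        have hidx : q * (m + 1) + (n - q) = q * m + n := by
          have : q * (m + 1) = q * m + q := by ring
          omega
        rw [hA, huni]
        rw [← hidx]
        exact (join_get? huni t (m+1) hm1 (n - q) (by omega)).symm
    have hmid : ((A ++ B).drop r).take q = C := by
      apply List.ext_getElem?
      intro n
      by_cases hn : n < q
      · rw [List.getElem?_take_of_lt hn, List.getElem?_drop]
        rw [hAB (r + n) (by omega)]
        have : q * m + (r + n) = j + n := by omega
        rw [this, hcopy n hn]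
      · rw [List.getElem?_eq_none_iff.mpr, List.getElem?_eq_none_iff.mpr]
        · rw [hC, huni]; omega
        · rw [List.length_take]; omega
    have hsplit : A ++ B = (A ++ B).take r ++ C ++ (A ++ B).drop (r + q) := by
      rw [List.append_assoc, ← hmid]
      conv_lhs => rw [← List.take_append_drop r (A ++ B)]
      congr 1
      conv_lhs => rw [← List.take_append_drop q ((A ++ B).drop r)]
      rw [List.drop_drop]
    rcases hsync _ _ _ _ _ hsplit with ⟨hv, -⟩ | ⟨hv, -⟩
    · have := congrArg List.length hv
      rw [List.length_take, hABlen, List.length_nil] at this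
      omega
    · have := congrArg List.length hv
      rw [List.length_drop, hABlen, List.length_nil] at this
      omega
  refine ⟨hmlt, ⟨m, by omega⟩, ?_⟩
  have hblock : h (t.get ⟨m, hmlt⟩) = h (t.get ⟨k, hk⟩) := by
    apply List.ext_getElem?
    intro n
    by_cases hn : n < q
    · rw [← join_get? huni t m hmlt n hn]
      have : q * m + n = j + n := by omega
      rw [this, hcopy n hn]
    · rw [List.getElem?_eq_none_iff.mpr (by rw [huni]; omega),
        List.getElem?_eq_none_iff.mpr (by rw [huni]; omega)]
  exact hinj hsync hblock

lemma finite_case (hq : 1 ≤ q) (huni : ∀ a, (h a).length = q)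
    (hsync : ∀ (a b c : σs) (v w : List σe),
      h a ++ h b = v ++ h c ++ w → (v = [] ∧ a = c) ∨ (w = [] ∧ b = c))
    {α β : ℚ} (hα : 1 < α) (hαβ : α < β) (hβ : β < 2) {p : ℕ} (hp : 1 ≤ p)
    (hcheck : ∀ w : List σs,
      (w.length : ℚ) < max (2 * β / (β - α))
        (2 * (q - 1 : ℚ) * (2 * β - 1) / (q * (β - 1))) →
      (∀ v, v ≠ [] → v <:+: w → exponent v ≤ α) →
      ∀ x : List σe, x ≠ [] → x <:+: (w.map h).flatten → p ≤ period x →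
        exponent x ≤ β)
    (t : List σs) (hfree : ∀ v, v ≠ [] → v <:+: t → exponent v ≤ α)
    (x : List σe) (hx0 : x ≠ []) (hxt : x <:+: (t.map h).flatten)
    (hpx : p ≤ period x) : exponent x ≤ β := by
  by_contra hcon
  push_neg at hcon
  have hcon' : β < (x.length : ℚ) / ((period x : ℕ) : ℚ) := hcon
  obtain ⟨u, v0, huv⟩ := hxt
  set J := (t.map h).flatten with hJdef
  set s := u.length with hsdef
  set L := x.length with hLdef
  set P := period x with hPdef
  have hPer : HasPeriod x P := period_hasPeriod x
  have hP1 : 1 ≤ P := hPer.1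
  have hβP : β * (P : ℚ) < (L : ℚ) := by
    have hPpos : (0:ℚ) < (P:ℚ) := by exact_mod_cast hP1
    exact (lt_div_iff₀ hPpos).mp hcon'
  have hLPq : (P:ℚ) < (L:ℚ) := by nlinarith
  have hLP : P < L := by exact_mod_cast hLPq
  have hxJ : (J.drop s).take L = x := by
    rw [← huv, List.append_assoc, List.drop_left, List.take_left]
  have hJlen : J.length = q * t.length := join_length huni t
  have hsLq : s + L ≤ q * t.length := by
    have := congrArg List.length huv
    simp only [List.length_append] at this
    omega
  have hxg : ∀ n, n < L → x[n]? = J[s + n]? := by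
    intro n hn
    rw [← hxJ, List.getElem?_take_of_lt hn, List.getElem?_drop]
  have hper : ∀ n, n + P < L → J[s + n]? = J[s + n + P]? := by
    intro n hn
    have h1 := hPer.2 n hn
    rw [hxg n (by omega), hxg (n + P) (by omega)] at h1
    rw [← Nat.add_assoc] at h1
    exact h1
  -- alignment quantities
  set K0' := s / q with hK0'def
  set d := s % q with hddef
  have hd : q * K0' + d = s := Nat.div_add_mod s q
  have hdq : d < q := Nat.mod_lt _ hq
  set K1 := (s + L) / q with hK1def
  set e := (s + L) % q with hedef
  have he1 : q * K1 + e = s + L := Nat.div_add_mod (s+L) q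
  have heq : e < q := Nat.mod_lt _ hq
  obtain ⟨K0, a, hK0, ha, hA, hK0ge, hK0le⟩ :
      ∃ K0 a, q * K0 = s + a ∧ a < q ∧ ((a = 0 ∧ d = 0) ∨ a + d = q)
        ∧ K0' ≤ K0 ∧ K0 ≤ K0' + 1 := by
    by_cases h0 : d = 0
    · exact ⟨K0', 0, by omega, by omega, Or.inl ⟨rfl, h0⟩, le_refl _, by omega⟩
    · refine ⟨K0' + 1, q - d, ?_, by omega, Or.inr (by omega), by omega, le_refl _⟩
      have : q * (K0' + 1) = q * K0' + q := by ring
      omega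
  obtain ⟨K1', f, hK1', hf, hE, hK1K1', hK1'le⟩ :
      ∃ K1' f, q * K1' = s + L + f ∧ f < q ∧ ((f = 0 ∧ e = 0) ∨ e + f = q)
        ∧ K1 ≤ K1' ∧ K1' ≤ K1 + 1 := by
    by_cases h0 : e = 0
    · exact ⟨K1, 0, by omega, by omega, Or.inl ⟨rfl, h0⟩, le_refl _, by omega⟩
    · refine ⟨K1 + 1, q - e, ?_, by omega, Or.inr (by omega), by omega, le_refl _⟩
      have : q * (K1 + 1) = q * K1 + q := by ring
      omega
  have hK1t : K1 ≤ t.length := by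
    refine Nat.le_of_mul_le_mul_left ?_ (by omega : 0 < q)
    omega
  have hK1't : K1' ≤ t.length := by
    rcases hE with ⟨hf0, he0⟩ | hef
    · refine Nat.le_of_mul_le_mul_left ?_ (by omega : 0 < q)
      omega
    · have he0 : 1 ≤ e := by omega
      have : q * K1 < q * t.length := by omega
      have hlt : K1 < t.length := Nat.lt_of_mul_lt_mul_left this
      omega
  have hK0'K1' : K0' ≤ K1' := by
    refine Nat.le_of_mul_le_mul_left ?_ (by omega : 0 < q)
    omega
  -- the covering word W
  set W := (t.drop K0').take (K1' - K0') with hWdef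
  have hWlen : W.length = K1' - K0' := by
    rw [hWdef, List.length_take, List.length_drop]
    exact min_eq_left (by omega)
  have hWt : W <:+: t := take_drop_infix t K0' (K1' - K0')
  have hWfree : ∀ v, v ≠ [] → v <:+: W → exponent v ≤ α :=
    fun v h1 h2 => hfree v h1 (h2.trans hWt)
  have hmulsub : q * (K1' - K0') = q * K1' - q * K0' := Nat.mul_sub q _ _
  have hWjoin : (W.map h).flatten = (J.drop (q * K0')).take (q * (K1' - K0')) :=
    join_slice huni t K0' K1' hK0'K1' hK1't
  have hxW2 : (((W.map h).flatten).drop (s - q * K0')).take L = x := by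
    rw [hWjoin, List.drop_take, List.drop_drop, List.take_take]
    have h1 : q * K0' + (s - q * K0') = s := by omega
    have h2 : min L (q * (K1' - K0') - (s - q * K0')) = L := by
      rw [hmulsub]; omega
    rw [h1, h2, hxJ]
  have hxW : x <:+: (W.map h).flatten := by
    rw [← hxW2]; exact take_drop_infix _ _ _
  have hqW : q * W.length = q * K1' - q * K0' := by rw [hWlen, hmulsub]
  have hq0 : (0:ℚ) < (q:ℚ) := by exact_mod_cast hq
  by_cases hS : P + q + a ≤ L
  · -- synchronization case
    have hK0lt : K0 < t.length := by
      have h2 : q * K0 < q * t.length := by omega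
      exact Nat.lt_of_mul_lt_mul_left h2
    have hcopy0 : ∀ i, i < q →
        J[(q * K0 + P) + i]? = (h (t.get ⟨K0, hK0lt⟩))[i]? := by
      intro i hi
      have h1 : J[s + (a + i)]? = J[s + (a + i) + P]? := hper (a+i) (by omega)
      have h2 := join_get? huni t K0 hK0lt i hi
      have e1 : (q * K0 + P) + i = s + (a + i) + P := by omega
      have e2 : q * K0 + i = s + (a + i) := by omega
      rw [e1, ← h1, ← e2, h2]
    have hjq : (q * K0 + P) + q ≤ q * t.length := by omega
    obtain ⟨-, hdvd, -⟩ := core hq huni hsync t K0 (q * K0 + P) hK0lt hjq hcopy0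
    have hqP : q ∣ P := (Nat.dvd_add_right (dvd_mul_right q K0)).mp hdvd
    obtain ⟨P'', hP''⟩ := hqP
    have hP''1 : 1 ≤ P'' := by
      rcases Nat.eq_zero_or_pos P'' with h0 | h0
      · rw [h0, Nat.mul_zero] at hP''; omega
      · exact h0
    have hqP'' : q * P'' = P := hP''.symm
    have hK0K1 : K0 + P'' + 1 ≤ K1 := by
      have hd1 : q * (K0 + P'' + 1) = q * K0 + q * P'' + q := by ring
      have hd2 : q * (K1 + 1) = q * K1 + q := by ring
      have hlt : q * (K0 + P'' + 1) < q * (K1 + 1) := by omega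
      have := Nat.lt_of_mul_lt_mul_left hlt
      omega
    -- the pulled-back word v
    set v := (t.drop K0).take (K1 - K0) with hvdef
    have hvlen : v.length = K1 - K0 := by
      rw [hvdef, List.length_take, List.length_drop]
      exact min_eq_left (by omega)
    have hvget : ∀ i, i < K1 - K0 → v[i]? = t[K0 + i]? := by
      intro i hi
      rw [hvdef, List.getElem?_take_of_lt hi, List.getElem?_drop]
    have hvper : HasPeriod v P'' := by
      refine ⟨hP''1, ?_⟩
      intro i hi
      rw [hvlen] at hi
      have hki : K0 + i < t.length := by omega
      have e1 : q * (K0 + i) = q * K0 + q * i := by ring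
      have e3 : K0 + i + P'' + 1 ≤ K1 := by omega
      have e4 : q * (K0 + i + P'' + 1) ≤ q * K1 := Nat.mul_le_mul_left q e3
      have e2 : q * (K0 + i + P'' + 1) = q * (K0 + i) + q * P'' + q := by ring
      have hjq2 : (q * (K0 + i) + P) + q ≤ q * t.length := by omega
      have hcopy2 : ∀ i', i' < q →
          J[(q * (K0 + i) + P) + i']? = (h (t.get ⟨K0 + i, hki⟩))[i']? := by
        intro i' hi'
        have hn : (a + q * i + i') + P < L := by omega
        have h1 := hper (a + q * i + i') hn
        have h2 := join_get? huni t (K0 + i) hki i' hi'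
        have e5 : (q * (K0 + i) + P) + i' = s + (a + q * i + i') + P := by omega
        have e6 : q * (K0 + i) + i' = s + (a + q * i + i') := by omega
        rw [e5, ← h1, ← e6, h2]
      obtain ⟨hm2, -, heq2⟩ := core hq huni hsync t (K0 + i) (q * (K0 + i) + P) hki hjq2 hcopy2
      have h7 : t[(q * (K0 + i) + P) / q]? = t[K0 + i]? := by
        rw [List.getElem?_eq_getElem hm2, List.getElem?_eq_getElem hki]; exact congrArg some heq2
      have ediv : (q * (K0 + i) + P) / q = K0 + i + P'' := by
        rw [hP'', ← Nat.mul_add, Nat.mul_div_cancel_left _ (by omega : 0 < q)]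
      rw [ediv] at h7
      rw [hvget i (by omega), hvget (i + P'') (by omega)]
      rw [show K0 + (i + P'') = K0 + i + P'' from by omega]
      exact h7.symm
    have hvnil : v ≠ [] := by
      have : 0 < v.length := by rw [hvlen]; omega
      exact List.length_pos_iff.mp this
    by_cases hS2 : ((K1 - K0 : ℕ) : ℚ) ≤ α * (P'' : ℚ)
    · -- short case: use hcheck with bound 2β/(β-α)
      have hae : q * (K1 - K0) + a + e = L := by
        have hm1 : q * (K1 - K0) = q * K1 - q * K0 := Nat.mul_sub q _ _
        have hm2 : q * K0 ≤ q * K1 := Nat.mul_le_mul_left q (by omega)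
        omega
      have hWK : W.length ≤ (K1 - K0) + 2 := by
        have hK0'K0 : K0' ≤ K0 := hK0ge
        omega
      -- rational arithmetic
      have cL : (q:ℚ) * ((K1 - K0 : ℕ) : ℚ) + (a:ℚ) + (e:ℚ) = (L:ℚ) := by
        exact_mod_cast hae
      have cP : (P:ℚ) = (q:ℚ) * (P'':ℚ) := by exact_mod_cast hP''
      have caq : (a:ℚ) + 1 ≤ (q:ℚ) := by exact_mod_cast ha
      have ceq : (e:ℚ) + 1 ≤ (q:ℚ) := by exact_mod_cast heq
      have cW : (W.length:ℚ) ≤ ((K1 - K0 : ℕ):ℚ) + 2 := by exact_mod_cast hWK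
      have cP'' : (1:ℚ) ≤ (P'':ℚ) := by exact_mod_cast hP''1
      have m1 : (q:ℚ) * ((K1 - K0 : ℕ):ℚ) ≤ (q:ℚ) * (α * (P'':ℚ)) :=
        mul_le_mul_of_nonneg_left hS2 (le_of_lt hq0)
      have hs1 : (q:ℚ) * ((P'':ℚ) * (β - α)) < (q:ℚ) * 2 := by nlinarith
      have hs2 : (P'':ℚ) * (β - α) < 2 := (mul_lt_mul_iff_right₀ hq0).mp hs1
      have hbound : (W.length : ℚ) < 2 * β / (β - α) := by
        rw [lt_div_iff₀ (by linarith : (0:ℚ) < β - α)]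
        have m2 : (W.length:ℚ) ≤ α * (P'':ℚ) + 2 := by linarith
        have m3 : (W.length:ℚ) * (β - α) ≤ (α * (P'':ℚ) + 2) * (β - α) :=
          mul_le_mul_of_nonneg_right m2 (by linarith)
        have m4 : α * ((P'':ℚ) * (β - α)) < α * 2 :=
          mul_lt_mul_of_pos_left hs2 (by linarith)
        nlinarith
      exact absurd (hcheck W (lt_max_iff.mpr (Or.inl hbound)) hWfree x hx0 hxW hpx)
        (not_le.mpr hcon)
    · -- long repetition pulls back: contradiction with α⁺-freeness of t
      push_neg at hS2
      have hvinf : v <:+: t := take_drop_infix t K0 (K1 - K0)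
      have hexp : α < exponent v := by
        refine lt_exponent hvper (by linarith) ?_
        rw [hvlen]
        exact hS2
      exact absurd (hfree v hvnil hvinf) (not_le.mpr hexp)
  · -- no synchronization possible: the factor is short
    push_neg at hS
    have key : q * W.length + 2 ≤ P + 3 * q ∧ L + 2 ≤ P + 2 * q ∧ 2 ≤ q := by
      have hm2 : q * K0' ≤ q * K1' := Nat.mul_le_mul_left q hK0'K1'
      omega
    have c1 : (q:ℚ) * (W.length:ℚ) + 2 ≤ (P:ℚ) + 3 * q := by exact_mod_cast key.1
    have c2 : (L:ℚ) + 2 ≤ (P:ℚ) + 2 * q := by exact_mod_cast key.2.1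
    have cq2 : (2:ℚ) ≤ (q:ℚ) := by exact_mod_cast key.2.2
    have hPβ : (P:ℚ) * (β - 1) < 2 * q - 2 := by nlinarith
    have hbound : (W.length : ℚ) < 2 * ((q:ℚ) - 1) * (2 * β - 1) / ((q:ℚ) * (β - 1)) := by
      rw [lt_div_iff₀ (by nlinarith : (0:ℚ) < (q:ℚ) * (β - 1))]
      have e2 : ((q:ℚ) * (W.length:ℚ)) * (β - 1) ≤ ((P:ℚ) + 3 * q - 2) * (β - 1) :=
        mul_le_mul_of_nonneg_right (by linarith) (by linarith)
      have e4 : (0:ℚ) ≤ ((q:ℚ) - 2) * (β - 1) :=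
        mul_nonneg (by linarith) (by linarith)
      nlinarith
    exact absurd (hcheck W (lt_max_iff.mpr (Or.inr hbound)) hWfree x hx0 hxW hpx)
      (not_le.mpr hcon)

end Stmt16Aux

theorem stmt16 {σs σe : Type*} (q : ℕ) (hq : 1 ≤ q) (h : σs → List σe)
    (huni : ∀ a, (h a).length = q)
    (hsync : ∀ (a b c : σs) (v w : List σe),
      h a ++ h b = v ++ h c ++ w → (v = [] ∧ a = c) ∨ (w = [] ∧ b = c))
    (α β : ℚ) (hα : 1 < α) (hαβ : α < β) (hβ : β < 2)
    (p : ℕ) (hp : 1 ≤ p)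
    (hcheck : ∀ w : List σs,
      (w.length : ℚ) < max (2 * β / (β - α))
        (2 * (q - 1 : ℚ) * (2 * β - 1) / (q * (β - 1))) →
      (∀ v, v ≠ [] → v <:+: w → exponent v ≤ α) →
      ∀ x : List σe, x ≠ [] → x <:+: (w.map h).flatten → p ≤ period x →
        exponent x ≤ β) :
    (∀ t : List σs, (∀ v, v ≠ [] → v <:+: t → exponent v ≤ α) →
      ∀ x : List σe, x ≠ [] → x <:+: (t.map h).flatten → p ≤ period x →
        exponent x ≤ β) ∧
    (∀ t : ℕ → σs, (∀ v : List σs, v ≠ [] → FactorOf v t → exponent v ≤ α) →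
      ∀ x : List σe, x ≠ [] →
        (∃ m : ℕ, x <:+: (((List.range m).map (fun i => h (t i))).flatten)) →
        p ≤ period x → exponent x ≤ β) := by
  constructor
  · intro t hfree x hx0 hxt hpx
    exact Stmt16Aux.finite_case hq huni hsync hα hαβ hβ hp hcheck t hfree x hx0 hxt hpx
  · intro t hfree x hx0 hex hpx
    obtain ⟨m, hxm⟩ := hex
    have hmap : ((List.range m).map t).map h = (List.range m).map (fun i => h (t i)) := by
      rw [List.map_map]; rfl
    have hfree' : ∀ v, v ≠ [] → v <:+: (List.range m).map t → exponent v ≤ α := by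
      intro v hv0 hvw
      obtain ⟨u, w, huw⟩ := hvw
      have hlen : u.length + v.length + w.length = m := by
        have := congrArg List.length huw
        simp only [List.length_append, List.length_map, List.length_range] at this
        omega
      refine hfree v hv0 ⟨u.length, ?_⟩
      apply List.ext_getElem?
      intro n
      by_cases hn : n < v.length
      · have h1 : ((List.range m).map t)[u.length + n]? = v[n]? := by
          rw [← huw, List.append_assoc,
            List.getElem?_append_right (by omega : u.length ≤ u.length + n)]
          rw [show u.length + n - u.length = n from by omega]
          exact List.getElem?_append_left hn
        have h2 : ((List.range m).map t)[u.length + n]? = some (t (u.length + n)) := by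
          rw [List.getElem?_map, List.getElem?_range (by omega)]; simp
        have h3 : ((List.range v.length).map (fun k => t (u.length + k)))[n]?
            = some (t (u.length + n)) := by
          rw [List.getElem?_map, List.getElem?_range hn]; simp
        rw [← h1, h2, h3]
      · rw [List.getElem?_eq_none_iff.mpr (by omega),
          List.getElem?_eq_none_iff.mpr (by simpa using (by omega : v.length ≤ n))]
    have hxt' : x <:+: (((List.range m).map t).map h).flatten := by rw [hmap]; exact hxm
    exact Stmt16Aux.finite_case hq huni hsync hα hαβ hβ hp hcheck _ hfree' x hx0 hxt' hpx
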